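/- Let N be an odd positive integer and let λ_0, …, λ_N be pairwise distinct positive real numbers. Assume Φ_N^{(j)}(x) ≥ 0 for every real x > 0 and every integer j ≥ 0. Then for every x > 0, every nonnegative integer k with 2k+1 ≤ N, and every vector p = (p_0, …, p_k) ∈ ℝ^{k+1}, one has Σ_{i=0}^{k} Σ_{j=0}^{k} p_i p_j b_{i+j+1}(x) ≥ 0. -/

import Mathlib

open MeasureTheory intervalIntegral Set

private lemma myIteratedDeriv_add (k : ℕ) (f : ℝ → ℝ) :
    ∀ m : ℕ, iteratedDeriv m (iteratedDeriv k f) = iteratedDeriv (m + k) f := by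
  intro m
  induction m with
  | zero => simp
  | succ m ih => rw [iteratedDeriv_succ, ih, ← iteratedDeriv_succ]; ring_nf

private lemma my_cont {f : ℝ → ℝ} (hf : ContDiff ℝ (⊤ : ℕ∞) f) (n : ℕ) :
    Continuous (iteratedDeriv n f) :=
  hf.continuous_iteratedDeriv n (by exact_mod_cast le_top)

private lemma my_hasDerivAt {f : ℝ → ℝ} (hf : ContDiff ℝ (⊤ : ℕ∞) f) (n : ℕ) (t : ℝ) :
    HasDerivAt (iteratedDeriv n f) (iteratedDeriv (n + 1) f t) t := by
  have hd : Differentiable ℝ (iteratedDeriv n f) :=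
    hf.differentiable_iteratedDeriv n (by exact_mod_cast WithTop.coe_lt_top n)
  rw [iteratedDeriv_succ]
  exact (hd t).hasDerivAt

private lemma my_smooth_iter {f : ℝ → ℝ} (hf : ContDiff ℝ (⊤ : ℕ∞) f) (k : ℕ) :
    ContDiff ℝ (⊤ : ℕ∞) (iteratedDeriv k f) := by
  apply contDiff_of_differentiable_iteratedDeriv
  intro m _
  rw [myIteratedDeriv_add]
  exact hf.differentiable_iteratedDeriv _ (by exact_mod_cast WithTop.coe_lt_top (m + k))

/-- Taylor's formula with integral remainder, centered at 0. -/
private lemma my_taylor_integral_remainder {f : ℝ → ℝ} (hf : ContDiff ℝ (⊤ : ℕ∞) f) (n : ℕ) (x : ℝ) :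
    f x = (∑ j ∈ Finset.range (n + 1), iteratedDeriv j f 0 * x ^ j / (Nat.factorial j)) +
      ∫ t in (0:ℝ)..x, (x - t) ^ n / (Nat.factorial n) * iteratedDeriv (n + 1) f t := by
  induction n with
  | zero =>
    have h1 : ∀ t ∈ Set.uIcc (0:ℝ) x, HasDerivAt f (iteratedDeriv 1 f t) t := fun t _ => by
      simpa using my_hasDerivAt hf 0 t
    have h2 : IntervalIntegrable (iteratedDeriv 1 f) volume 0 x :=
      (my_cont hf 1).intervalIntegrable 0 x
    have h3 := intervalIntegral.integral_eq_sub_of_hasDerivAt h1 h2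
    simp only [Finset.range_one, Finset.sum_singleton, iteratedDeriv_zero, pow_zero,
      Nat.factorial_zero, Nat.cast_one, div_one, one_mul, mul_one, zero_add]
    rw [h3]; ring
  | succ n ih =>
    rw [ih]
    have key : ∫ t in (0:ℝ)..x, (x - t) ^ n / (Nat.factorial n) * iteratedDeriv (n + 1) f t
        = iteratedDeriv (n + 1) f 0 * x ^ (n + 1) / (Nat.factorial (n + 1)) +
          ∫ t in (0:ℝ)..x, (x - t) ^ (n + 1) / (Nat.factorial (n + 1)) *
            iteratedDeriv (n + 2) f t := by
      set u : ℝ → ℝ := fun t => (x - t) ^ (n + 1) / (Nat.factorial (n + 1)) with hu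
      set u' : ℝ → ℝ := fun t => -((x - t) ^ n / (Nat.factorial n)) with hu'
      have hderivu : ∀ t ∈ Set.uIcc (0:ℝ) x, HasDerivAt u (u' t) t := by
        intro t _
        have h1 : HasDerivAt (fun t : ℝ => x - t) (-1) t := by
          simpa using (hasDerivAt_id t).const_sub x
        have h2 := (h1.pow (n + 1)).div_const ((Nat.factorial (n + 1) : ℝ))
        refine h2.congr_deriv ?_
        have h3 : (Nat.factorial (n + 1) : ℝ) = (n + 1) * Nat.factorial n := by
          rw [Nat.factorial_succ]; push_cast; ring
        have h4 : (Nat.factorial n : ℝ) ≠ 0 := Nat.cast_ne_zero.2 (Nat.factorial_ne_zero n)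
        simp only [hu']
        rw [h3, Nat.add_sub_cancel]; push_cast
        field_simp
      have hderivv : ∀ t ∈ Set.uIcc (0:ℝ) x,
          HasDerivAt (iteratedDeriv (n + 1) f) (iteratedDeriv (n + 2) f t) t :=
        fun t _ => my_hasDerivAt hf (n + 1) t
      have hInt1 : IntervalIntegrable u' volume 0 x := by
        apply Continuous.intervalIntegrable; fun_prop
      have hInt2 : IntervalIntegrable (iteratedDeriv (n + 2) f) volume 0 x :=
        (my_cont hf (n + 2)).intervalIntegrable 0 x
      have hparts := intervalIntegral.integral_mul_deriv_eq_deriv_mul hderivu hderivv hInt1 hInt2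
      have hux : u x = 0 := by simp [hu]
      have hu0 : u 0 = x ^ (n + 1) / (Nat.factorial (n + 1)) := by simp [hu]
      rw [hux, hu0] at hparts
      have hneg : ∫ t in (0:ℝ)..x, u' t * iteratedDeriv (n + 1) f t
          = -∫ t in (0:ℝ)..x, (x - t) ^ n / (Nat.factorial n) * iteratedDeriv (n + 1) f t := by
        rw [← intervalIntegral.integral_neg]
        congr 1; funext t; simp [hu']
      rw [hneg] at hparts
      have hident : (∫ t in (0:ℝ)..x, u t * iteratedDeriv (n + 2) f t)
          = ∫ t in (0:ℝ)..x, (x - t) ^ (n + 1) / (Nat.factorial (n + 1)) *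
              iteratedDeriv (n + 2) f t := rfl
      rw [hident] at hparts
      linear_combination -hparts
    rw [key, Finset.sum_range_succ _ (n + 1), show n + 1 + 1 = n + 2 from rfl]
    ring

set_option maxHeartbeats 1000000 in
/-- Under the nonnegativity assumption on all derivatives of `Φ_N` on
`(0, ∞)`, for every `x > 0`, every `k` with `2k+1 ≤ N` and every `p ∈ ℝ^{k+1}`,
`Σ_{i,j=0}^{k} p_i p_j b_{i+j+1}(x) ≥ 0`. -/
theorem hankel_shifted_quadratic_form_nonneg
    (N : ℕ) (hN : 0 < N) (hNodd : Odd N)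
    (l : Fin (N + 1) → ℝ) (hl : Function.Injective l) (hlpos : ∀ j, 0 < l j)
    (Φ : ℝ → ℝ)
    (hΦmem : Φ ∈ Submodule.span ℝ
        (Set.range (fun j : Fin (N + 1) => fun x : ℝ => Real.exp (l j * x))))
    (hΦ0 : ∀ j < N, iteratedDeriv j Φ 0 = 0)
    (hΦN : iteratedDeriv N Φ 0 = 1)
    (hΦnonneg : ∀ x : ℝ, 0 < x → ∀ j : ℕ, 0 ≤ iteratedDeriv j Φ x)
    (b : ℕ → ℝ → ℝ)
    (hb : ∀ j ≤ N, b j = fun x => (Nat.factorial j : ℝ) * iteratedDeriv (N - j) Φ x) :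
    ∀ x : ℝ, 0 < x → ∀ k : ℕ, 2 * k + 1 ≤ N → ∀ p : Fin (k + 1) → ℝ,
      0 ≤ ∑ i : Fin (k + 1), ∑ j : Fin (k + 1), p i * p j * b ((i : ℕ) + (j : ℕ) + 1) x := by
  -- Φ is smooth
  have hsmooth : ContDiff ℝ (⊤ : ℕ∞) Φ := by
    refine Submodule.span_induction ?_ ?_ ?_ ?_ hΦmem
    · rintro f ⟨j, rfl⟩
      exact Real.contDiff_exp.comp (contDiff_const.mul contDiff_id)
    · exact contDiff_const
    · intro f g _ _ hf hg; exact hf.add hg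
    · intro c f _ hf; exact contDiff_const.smul hf
  set G : ℝ → ℝ := iteratedDeriv (N + 1) Φ with hG
  have hGcont : Continuous G := my_cont hsmooth (N + 1)
  -- G is nonneg on [0, ∞)
  have hGnonneg : ∀ t : ℝ, 0 ≤ t → 0 ≤ G t := by
    intro t ht
    rcases eq_or_lt_of_le ht with h | h
    · subst h
      have htend : Filter.Tendsto G (nhdsWithin 0 (Set.Ioi 0)) (nhds (G 0)) :=
        hGcont.continuousAt.continuousWithinAt
      refine ge_of_tendsto htend ?_
      filter_upwards [self_mem_nhdsWithin] with s hs
      exact hΦnonneg s hs (N + 1)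
    · exact hΦnonneg t h (N + 1)
  -- key integral formula for b
  have hbkey : ∀ n ≤ N, ∀ x : ℝ,
      b n x = x ^ n + ∫ t in (0:ℝ)..x, (x - t) ^ n * G t := by
    intro n hn x
    have hfs : ContDiff ℝ (⊤ : ℕ∞) (iteratedDeriv (N - n) Φ) := my_smooth_iter hsmooth _
    have htaylor := my_taylor_integral_remainder hfs n x
    have hcomp : ∀ m : ℕ, iteratedDeriv m (iteratedDeriv (N - n) Φ) =
        iteratedDeriv (m + (N - n)) Φ := fun m => myIteratedDeriv_add (N - n) Φ m
    have hsum : (∑ j ∈ Finset.range (n + 1),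
        iteratedDeriv j (iteratedDeriv (N - n) Φ) 0 * x ^ j / (Nat.factorial j))
        = x ^ n / (Nat.factorial n) := by
      rw [Finset.sum_range_succ]
      have h1 : ∀ j ∈ Finset.range n,
          iteratedDeriv j (iteratedDeriv (N - n) Φ) 0 * x ^ j / (Nat.factorial j) = 0 := by
        intro j hj
        have hj' := Finset.mem_range.mp hj
        rw [hcomp j, hΦ0 (j + (N - n)) (by omega)]
        ring
      rw [Finset.sum_eq_zero h1, hcomp n, show n + (N - n) = N by omega, hΦN]
      ring
    rw [hsum, hcomp (n + 1), show n + 1 + (N - n) = N + 1 by omega] at htaylor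
    have hfac : (Nat.factorial n : ℝ) ≠ 0 := Nat.cast_ne_zero.2 (Nat.factorial_ne_zero n)
    simp only [hb n hn]
    rw [htaylor, mul_add]
    have e1 : (Nat.factorial n : ℝ) * (x ^ n / (Nat.factorial n)) = x ^ n := by field_simp
    rw [e1, hG, ← intervalIntegral.integral_const_mul]
    congr 1
    apply intervalIntegral.integral_congr
    intro t _
    field_simp
  -- main estimate
  intro x hx k hk p
  have hble : ∀ i j : Fin (k + 1), (i : ℕ) + (j : ℕ) + 1 ≤ N := by
    intro i j
    have hi := i.isLt
    have hj := j.isLt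
    omega
  have hrw : ∀ i j : Fin (k + 1), p i * p j * b ((i : ℕ) + (j : ℕ) + 1) x
      = p i * p j * x ^ ((i : ℕ) + (j : ℕ) + 1)
        + ∫ t in (0:ℝ)..x, p i * p j * (x - t) ^ ((i : ℕ) + (j : ℕ) + 1) * G t := by
    intro i j
    rw [hbkey _ (hble i j) x, mul_add]
    congr 1
    rw [← intervalIntegral.integral_const_mul]
    congr 1; funext t; ring
  have hpoly : ∀ y : ℝ, (∑ i : Fin (k + 1), ∑ j : Fin (k + 1),
      p i * p j * y ^ ((i : ℕ) + (j : ℕ) + 1))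
      = y * (∑ i : Fin (k + 1), p i * y ^ (i : ℕ)) ^ 2 := by
    intro y
    rw [sq, Finset.sum_mul_sum, Finset.mul_sum]
    apply Finset.sum_congr rfl
    intro i _
    rw [Finset.mul_sum]
    apply Finset.sum_congr rfl
    intro j _
    rw [pow_add, pow_succ]
    ring
  have hcont : ∀ i j : Fin (k + 1), IntervalIntegrable
      (fun t => p i * p j * (x - t) ^ ((i : ℕ) + (j : ℕ) + 1) * G t) volume 0 x := by
    intro i j
    apply Continuous.intervalIntegrable
    exact (continuous_const.mul ((continuous_const.sub continuous_id).pow _)).mul hGcont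
  have hcont2 : ∀ i : Fin (k + 1), IntervalIntegrable
      (fun t => ∑ j : Fin (k + 1), p i * p j * (x - t) ^ ((i : ℕ) + (j : ℕ) + 1) * G t)
      volume 0 x := by
    intro i
    apply Continuous.intervalIntegrable
    exact continuous_finset_sum _ fun j _ =>
      (continuous_const.mul ((continuous_const.sub continuous_id).pow _)).mul hGcont
  have hsum_eq : (∑ i : Fin (k + 1), ∑ j : Fin (k + 1), p i * p j * b ((i : ℕ) + (j : ℕ) + 1) x)
      = (∑ i : Fin (k + 1), ∑ j : Fin (k + 1), p i * p j * x ^ ((i : ℕ) + (j : ℕ) + 1))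
        + ∑ i : Fin (k + 1), ∑ j : Fin (k + 1),
            ∫ t in (0:ℝ)..x, p i * p j * (x - t) ^ ((i : ℕ) + (j : ℕ) + 1) * G t := by
    simp only [hrw, Finset.sum_add_distrib]
  have hswap : (∑ i : Fin (k + 1), ∑ j : Fin (k + 1),
      ∫ t in (0:ℝ)..x, p i * p j * (x - t) ^ ((i : ℕ) + (j : ℕ) + 1) * G t)
      = ∫ t in (0:ℝ)..x, ∑ i : Fin (k + 1), ∑ j : Fin (k + 1),
          p i * p j * (x - t) ^ ((i : ℕ) + (j : ℕ) + 1) * G t := by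
    calc (∑ i : Fin (k + 1), ∑ j : Fin (k + 1),
        ∫ t in (0:ℝ)..x, p i * p j * (x - t) ^ ((i : ℕ) + (j : ℕ) + 1) * G t)
        = ∑ i : Fin (k + 1), ∫ t in (0:ℝ)..x, ∑ j : Fin (k + 1),
            p i * p j * (x - t) ^ ((i : ℕ) + (j : ℕ) + 1) * G t :=
          Finset.sum_congr rfl fun i _ =>
            (intervalIntegral.integral_finset_sum (fun j _ => hcont i j)).symm
      _ = ∫ t in (0:ℝ)..x, ∑ i : Fin (k + 1), ∑ j : Fin (k + 1),
            p i * p j * (x - t) ^ ((i : ℕ) + (j : ℕ) + 1) * G t :=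
          (intervalIntegral.integral_finset_sum
            (f := fun (i : Fin (k + 1)) (t : ℝ) => ∑ j : Fin (k + 1),
              p i * p j * (x - t) ^ ((i : ℕ) + (j : ℕ) + 1) * G t)
            (fun i _ => hcont2 i)).symm
  have hintg_eq : ∀ t : ℝ, (∑ i : Fin (k + 1), ∑ j : Fin (k + 1),
      p i * p j * (x - t) ^ ((i : ℕ) + (j : ℕ) + 1) * G t)
      = (x - t) * (∑ i : Fin (k + 1), p i * (x - t) ^ (i : ℕ)) ^ 2 * G t := by
    intro t
    rw [← hpoly (x - t), Finset.sum_mul]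
    refine Finset.sum_congr rfl fun i _ => ?_
    rw [Finset.sum_mul]
  rw [hsum_eq, hswap, hpoly x]
  have h1 : 0 ≤ x * (∑ i : Fin (k + 1), p i * x ^ (i : ℕ)) ^ 2 :=
    mul_nonneg hx.le (sq_nonneg _)
  have h2 : 0 ≤ ∫ t in (0:ℝ)..x, ∑ i : Fin (k + 1), ∑ j : Fin (k + 1),
      p i * p j * (x - t) ^ ((i : ℕ) + (j : ℕ) + 1) * G t := by
    apply intervalIntegral.integral_nonneg hx.le
    intro t ht
    rw [hintg_eq t]
    have h3 : 0 ≤ x - t := by simp only [Set.mem_Icc] at ht; linarith [ht.2]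
    exact mul_nonneg (mul_nonneg h3 (sq_nonneg _)) (hGnonneg t ht.1)
  linarith
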